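/- Let K_e = {(x¹,x²,x³) ∈ ℝ³ : (x³)² = (x¹)²/a² + (x²)²/b², x³ > 0} with a > b > 0, and for a point x ∈ ℝ³ and a unit vector v set m_{i,j} = xⁱvʲ − xʲvⁱ (i < j), I₁ = m₁₂² + m₁₃² + m₂₃², I₂ = a²m₂₃² + b²m₁₃² − m₁₂². Suppose p₁, p₂, …, p_N ∈ K_e are consecutive reflection points of a billiard trajectory inside K_e, i.e., with v_k = (p_{k+1} − p_k)/‖p_{k+1} − p_k‖, for each interior reflection point the difference v_k − v_{k−1} is orthogonal to the tangent plane of K_e at p_k (and nonzero). Assume the values of the first integrals along the trajectory are I₁ = c₁ > 0 and I₂ = c₂ > 0. Then N ≤ N_{c₁,c₂} := ⌈ π / arcsin( 2ab√(c₁c₂) / (a²(b²+1)c₁ + (b²+1)c₂) ) ⌉. -/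

import Mathlib

open Real
open scoped RealInnerProductSpace

noncomputable section

/-- The elliptic cone `(x³)² = (x¹)²/a² + (x²)²/b²`, `x³ > 0`. -/
def Ke (a b : ℝ) : Set (EuclideanSpace ℝ (Fin 3)) :=
  {x | (x 2) ^ 2 = (x 0) ^ 2 / a ^ 2 + (x 1) ^ 2 / b ^ 2 ∧ 0 < x 2}

/-- The tangent plane to the cone `Ke a b` at a point `p`: the vectors orthogonal to the
gradient of the defining function `(x¹)²/a² + (x²)²/b² - (x³)²`. -/
def tangentKe (a b : ℝ) (p : EuclideanSpace ℝ (Fin 3)) : Set (EuclideanSpace ℝ (Fin 3)) :=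
  {u | u 0 * p 0 / a ^ 2 + u 1 * p 1 / b ^ 2 - u 2 * p 2 = 0}

def m12 (x v : EuclideanSpace ℝ (Fin 3)) : ℝ := x 0 * v 1 - x 1 * v 0
def m13 (x v : EuclideanSpace ℝ (Fin 3)) : ℝ := x 0 * v 2 - x 2 * v 0
def m23 (x v : EuclideanSpace ℝ (Fin 3)) : ℝ := x 1 * v 2 - x 2 * v 1

def I1 (x v : EuclideanSpace ℝ (Fin 3)) : ℝ := m12 x v ^ 2 + m13 x v ^ 2 + m23 x v ^ 2

def I2 (a b : ℝ) (x v : EuclideanSpace ℝ (Fin 3)) : ℝ :=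
  a ^ 2 * m23 x v ^ 2 + b ^ 2 * m13 x v ^ 2 - m12 x v ^ 2

/- ### Auxiliary lemmas -/

lemma Fpos (A B k m : ℝ) (hA : 0 < A) (hB : 0 < B) (hk0 : 0 ≤ k) (hk2 : k ≤ 2) (hm : 0 ≤ m) :
    4*B^2*k*(2*B*(A+1)-A*B*k+2*m) + 4*B^2*((A+1)-k*(A+B)/2-m)^2
      ≤ (B+1)^2*(2*B*(A+1)-A*B*k+2*m+B*k)^2 := by
  have hu : 0 ≤ 2 - k := by linarith
  have hβ : 0 ≤ 4*B*((2-k)*A*(1+3*B+B^2) + (2+k) + 6*B + 2*B^2) := by positivity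
  have hq : 0 < A^2 - A + 1 := by nlinarith [sq_nonneg (A-1), sq_nonneg A]
  have hG1 : 0 ≤ 24 + 12*(2-k)*(A-1) + 2*(2-k)^2*(A^2-A+1) := by
    nlinarith [sq_nonneg (4*(A^2-A+1)*(2-k) + 12*(A-1)), sq_nonneg (A+1), hq]
  have hγ : 0 ≤ B^2*(k*(4+k+2*A*(2-k)) + B*(24 + 12*(2-k)*(A-1) + 2*(2-k)^2*(A^2-A+1))
      + B^2*(4+4*k + (2-k)^2*A^2 + 2*(2-k)*A*(2+k))) := by positivity
  nlinarith [mul_nonneg hβ hm, hγ, mul_nonneg (mul_nonneg (by linarith : (0:ℝ) ≤ 4+8*B) hm) hm]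

set_option maxHeartbeats 1600000 in
lemma master (a b x0 x1 x2 y0 y1 y2 : ℝ) (hb : 0 < b) (hab : b < a)
    (hx : x2^2 = x0^2/a^2 + x1^2/b^2) (hx2 : 0 < x2)
    (hy : y2^2 = y0^2/a^2 + y1^2/b^2) (hy2 : 0 < y2)
    (hpos : 0 < a^2*(x1*y2-x2*y1)^2 + b^2*(x0*y2-x2*y0)^2 - (x0*y1-x1*y0)^2) :
    4*a^2*b^2*(a^2*(x1*y2-x2*y1)^2 + b^2*(x0*y2-x2*y0)^2 - (x0*y1-x1*y0)^2) *
      ((x0^2+x1^2+x2^2)*(y0^2+y1^2+y2^2))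
    ≤ (a^2*(b^2+1)*((x0*y1-x1*y0)^2+(x0*y2-x2*y0)^2+(x1*y2-x2*y1)^2)
        + (b^2+1)*(a^2*(x1*y2-x2*y1)^2 + b^2*(x0*y2-x2*y0)^2 - (x0*y1-x1*y0)^2))^2 := by
  have ha' : 0 < a := hb.trans hab
  have hA0 : a ≠ 0 := ne_of_gt ha'
  have hB0 : b ≠ 0 := ne_of_gt hb
  have hX0 : x2 ≠ 0 := ne_of_gt hx2
  have hY0 : y2 ≠ 0 := ne_of_gt hy2
  field_simp at hx hy
  obtain ⟨p, hpdef⟩ : ∃ p : ℝ, p = x0/(a*x2) := ⟨_, rfl⟩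
  obtain ⟨q, hqdef⟩ : ∃ q : ℝ, q = x1/(b*x2) := ⟨_, rfl⟩
  obtain ⟨r, hrdef⟩ : ∃ r : ℝ, r = y0/(a*y2) := ⟨_, rfl⟩
  obtain ⟨s, hsdef⟩ : ∃ s : ℝ, s = y1/(b*y2) := ⟨_, rfl⟩
  obtain ⟨σ, hσdef⟩ : ∃ σ : ℝ, σ = x2*y2 := ⟨_, rfl⟩
  have hσ : 0 < σ := hσdef ▸ mul_pos hx2 hy2
  have hp : p^2+q^2 = 1 := by
    rw [hpdef, hqdef]; field_simp; linear_combination (-1)*hx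
  have hP : r^2+s^2 = 1 := by
    rw [hrdef, hsdef]; field_simp; linear_combination (-1)*hy
  clear hx hy
  have e13 : x0*y2 - x2*y0 = a*σ*(p-r) := by
    rw [hpdef, hrdef, hσdef]; field_simp
  have e23 : x1*y2 - x2*y1 = b*σ*(q-s) := by
    rw [hqdef, hsdef, hσdef]; field_simp
  have e12 : x0*y1 - x1*y0 = a*b*σ*(p*s-q*r) := by
    rw [hpdef, hqdef, hrdef, hsdef, hσdef]; field_simp
  have eW : x0*y0+x1*y1+x2*y2 = σ*(a^2*(p*r)+b^2*(q*s)+1) := by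
    rw [hpdef, hqdef, hrdef, hsdef, hσdef]; field_simp
  obtain ⟨k, hkdef⟩ : ∃ k : ℝ, k = 1 - (p*r+q*s) := ⟨_, rfl⟩
  have h2k : 2*k = (p-r)^2+(q-s)^2 := by
    rw [hkdef]; linear_combination (-1)*hp + (-1)*hP
  have hk0 : 0 ≤ k := by linarith [h2k, sq_nonneg (p-r), sq_nonneg (q-s)]
  have h2k2 : 2*(2-k) = (p+r)^2+(q+s)^2 := by
    rw [hkdef]; linear_combination (-1)*hp + (-1)*hP
  have hk2 : k ≤ 2 := by linarith [h2k2, sq_nonneg (p+r), sq_nonneg (q+s)]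
  have hI2eq : a^2*(x1*y2-x2*y1)^2 + b^2*(x0*y2-x2*y0)^2 - (x0*y1-x1*y0)^2
      = a^2*b^2*σ^2*k^2 := by
    rw [e13, e23, e12, hkdef]
    linear_combination (a^2*b^2*σ^2*(1-r^2-s^2))*hp
  have hk2pos : 0 < a^2*b^2*σ^2*k^2 := by rw [← hI2eq]; exact hpos
  have hkne : k ≠ 0 := by
    intro h; rw [h] at hk2pos; norm_num at hk2pos
  have hkpos : 0 < k := hk0.lt_of_ne' hkne
  clear hpos hk2pos
  have hab2 : 0 ≤ a^2 - b^2 := by nlinarith [hb, hab]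
  obtain ⟨m, hmdef⟩ : ∃ m : ℝ, m = (a^2*(p-r)^2 + b^2*(q-s)^2 - 2*k*b^2)/(2*k) := ⟨_, rfl⟩
  have hm : 2*k*m = a^2*(p-r)^2 + b^2*(q-s)^2 - 2*k*b^2 := by
    rw [hmdef]; field_simp
  have hm' : 2*(1-(p*r+q*s))*m = a^2*(p-r)^2 + b^2*(q-s)^2 - 2*(1-(p*r+q*s))*b^2 := by
    rw [← hkdef]; exact hm
  have h2km : 0 ≤ 2*k*m := by
    rw [hm]
    nlinarith [h2k, mul_nonneg hab2 (sq_nonneg (p-r)), sq_nonneg b, sq_nonneg (q-s)]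
  have hm0 : 0 ≤ m := by
    rcases le_or_gt 0 m with h | h
    · exact h
    · nlinarith [mul_pos (by linarith : (0:ℝ) < 2*k) (by linarith : (0:ℝ) < -m)]
  have hI1eq : (x0*y1-x1*y0)^2+(x0*y2-x2*y0)^2+(x1*y2-x2*y1)^2
      = σ^2*(k*(a^2*b^2*(2-k) + 2*(b^2+m))) := by
    rw [e12, e13, e23, hkdef]
    linear_combination (-σ^2)*hm' + (a^2*b^2*σ^2*(r^2+s^2))*hp + (a^2*b^2*σ^2)*hP
  have hW : x0*y0+x1*y1+x2*y2 = σ*((a^2+1) - k*(a^2+b^2)/2 - m) := by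
    rw [eW, hkdef]
    have hscal : 2*(1-(p*r+q*s))*(a^2*(p*r)+b^2*(q*s)+1)
        = 2*(1-(p*r+q*s))*((a^2+1) - (1-(p*r+q*s))*(a^2+b^2)/2 - m) := by
      linear_combination hm' + (b^2+s^2*(a^2-b^2))*hp + (a^2-p^2*(a^2-b^2))*hP
    have hkne' : 2*(1-(p*r+q*s)) ≠ 0 := by rw [← hkdef]; exact ne_of_gt (by linarith)
    have := mul_left_cancel₀ hkne' hscal
    rw [this]
  have lag : (x0^2+x1^2+x2^2)*(y0^2+y1^2+y2^2)
      = (x0*y0+x1*y1+x2*y2)^2 + ((x0*y1-x1*y0)^2+(x0*y2-x2*y0)^2+(x1*y2-x2*y1)^2) := by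
    ring
  rw [hI2eq, lag, hW, hI1eq, ← sub_nonneg]
  have fp := Fpos (a^2) (b^2) k m (by positivity) (by positivity) hk0 hk2 hm0
  have fp' : 0 ≤ (b^2+1)^2*(2*b^2*(a^2+1)-a^2*b^2*k+2*m+b^2*k)^2
      - (4*(b^2)^2*k*(2*b^2*(a^2+1)-a^2*b^2*k+2*m)
        + 4*(b^2)^2*((a^2+1)-k*(a^2+b^2)/2-m)^2) := by
    linarith [fp]
  have key : (a^2*(b^2+1)*(σ^2*(k*(a^2*b^2*(2-k) + 2*(b^2+m))))
        + (b^2+1)*(a^2*b^2*σ^2*k^2))^2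
      - 4*a^2*b^2*(a^2*b^2*σ^2*k^2) *
        ((σ*((a^2+1) - k*(a^2+b^2)/2 - m))^2 + σ^2*(k*(a^2*b^2*(2-k) + 2*(b^2+m))))
      = (a^2*σ^2*k)^2 * ((b^2+1)^2*(2*b^2*(a^2+1)-a^2*b^2*k+2*m+b^2*k)^2
        - (4*(b^2)^2*k*(2*b^2*(a^2+1)-a^2*b^2*k+2*m)
          + 4*(b^2)^2*((a^2+1)-k*(a^2+b^2)/2-m)^2)) := by
    ring
  rw [key]
  exact mul_nonneg (sq_nonneg _) fp'

lemma core (s w w' c₁ r r' : ℝ) (hs0 : 0 < s) (hs1 : s ≤ 1) (hc : 0 < c₁)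
    (hr : 0 < r) (hr' : 0 < r') (hw : r^2 = c₁ + w^2) (hw' : r'^2 = c₁ + w'^2)
    (hkey : s * (r * r') ≤ Real.sqrt c₁ * (w' - w)) :
    Real.arccos (w'/r') ≤ Real.arccos (w/r) - Real.arcsin s := by
  have habs : |w/r| < 1 := by
    rw [abs_div, abs_of_pos hr, div_lt_one hr]
    nlinarith [abs_nonneg w, sq_abs w]
  have habs' : |w'/r'| < 1 := by
    rw [abs_div, abs_of_pos hr', div_lt_one hr']
    nlinarith [abs_nonneg w', sq_abs w']
  obtain ⟨h1, h2⟩ := abs_lt.mp habs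
  obtain ⟨h1', h2'⟩ := abs_lt.mp habs'
  set ψ := Real.arccos (w/r) with hψ
  set ψ' := Real.arccos (w'/r') with hψ'
  have hψ0 : 0 < ψ := Real.arccos_pos.mpr h2
  have hψπ : ψ < π := by
    rcases lt_or_eq_of_le (Real.arccos_le_pi (w/r)) with h | h
    · exact h
    · rw [Real.arccos_eq_pi] at h
      linarith
  have hψ0' : 0 < ψ' := Real.arccos_pos.mpr h2'
  have hψπ' : ψ' < π := by
    rcases lt_or_eq_of_le (Real.arccos_le_pi (w'/r')) with h | h
    · exact h
    · rw [Real.arccos_eq_pi] at h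
      linarith
  have hcos : Real.cos ψ = w/r := Real.cos_arccos (by linarith) (by linarith)
  have hcos' : Real.cos ψ' = w'/r' := Real.cos_arccos (by linarith) (by linarith)
  have hsin : Real.sin ψ = Real.sqrt c₁ / r := by
    rw [hψ, Real.sin_arccos]
    rw [show 1 - (w/r)^2 = c₁/r^2 by field_simp; linarith]
    rw [Real.sqrt_div hc.le, Real.sqrt_sq hr.le]
  have hsin' : Real.sin ψ' = Real.sqrt c₁ / r' := by
    rw [hψ', Real.sin_arccos]
    rw [show 1 - (w'/r')^2 = c₁/r'^2 by field_simp; linarith]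
    rw [Real.sqrt_div hc.le, Real.sqrt_sq hr'.le]
  have hsinθ : s ≤ Real.sin (ψ - ψ') := by
    rw [Real.sin_sub, hsin, hsin', hcos, hcos']
    rw [show Real.sqrt c₁ / r * (w'/r') - w/r * (Real.sqrt c₁/r') = Real.sqrt c₁ * (w' - w) / (r*r') by field_simp]
    rw [le_div_iff₀ (by positivity)]
    linarith
  have hθpos : 0 < ψ - ψ' := by
    by_contra h
    push_neg at h
    have : Real.sin (ψ - ψ') ≤ 0 :=
      Real.sin_nonpos_of_nonpos_of_neg_pi_le (by linarith) (by linarith)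
    linarith
  have harc : Real.arcsin s ≤ ψ - ψ' := by
    rcases le_or_gt (ψ - ψ') (π/2) with hle | hlt
    · calc Real.arcsin s ≤ Real.arcsin (Real.sin (ψ - ψ')) := Real.monotone_arcsin hsinθ
        _ = ψ - ψ' := Real.arcsin_sin (by linarith) hle
    · linarith [Real.arcsin_le_pi_div_two s]
  linarith

lemma innerc (x y : EuclideanSpace ℝ (Fin 3)) :
    ⟪x, y⟫ = x 0 * y 0 + x 1 * y 1 + x 2 * y 2 := by
  simp [PiLp.inner_apply, Fin.sum_univ_three, RCLike.inner_apply, mul_comm]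

lemma normsq (x : EuclideanSpace ℝ (Fin 3)) : ‖x‖^2 = x 0^2 + x 1^2 + x 2^2 := by
  rw [← real_inner_self_eq_norm_sq, innerc]; ring

lemma sqle (A B : ℝ) (hA : 0 ≤ A) (hB : 0 < B) (h : A^2 ≤ B^2) : A ≤ B := by
  nlinarith [h, hA, hB]

lemma sbound (a b c₁ c₂ : ℝ) (ha : 0 < a) (hb : 0 < b) (hc₁ : 0 < c₁) (hc₂ : 0 < c₂) :
    2*a*b*Real.sqrt (c₁*c₂) ≤ a^2*(b^2+1)*c₁ + (b^2+1)*c₂ := by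
  rw [Real.sqrt_mul hc₁.le]
  set u := Real.sqrt c₁ with hu
  set w := Real.sqrt c₂ with hw
  have hu0 : 0 < u := Real.sqrt_pos.mpr hc₁
  have hw0 : 0 < w := Real.sqrt_pos.mpr hc₂
  have hc₁' : c₁ = u^2 := (Real.sq_sqrt hc₁.le).symm
  have hc₂' : c₂ = w^2 := (Real.sq_sqrt hc₂.le).symm
  rw [hc₁', hc₂']
  have t1 : 0 ≤ (b^2+1)*(a*u-w)^2 := by positivity
  have t2 : 0 ≤ 2*a*(u*w)*((b-1)^2+b) := by positivity
  nlinarith [t1, t2]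

set_option maxHeartbeats 800000 in
lemma seg (a b c₁ c₂ : ℝ) (hb : 0 < b) (hab : b < a) (hc₁ : 0 < c₁) (hc₂ : 0 < c₂)
    (x y v : EuclideanSpace ℝ (Fin 3)) (hx : x ∈ Ke a b) (hy : y ∈ Ke a b)
    (hxy : y ≠ x) (hv : v = ‖y - x‖⁻¹ • (y - x))
    (h1 : I1 x v = c₁) (h2 : I2 a b x v = c₂) :
    ‖x‖^2 = c₁ + ⟪x, v⟫^2 ∧
    Real.arccos (⟪y, v⟫ / ‖y‖) ≤ Real.arccos (⟪x, v⟫ / ‖x‖)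
      - Real.arcsin (2*a*b*Real.sqrt (c₁*c₂) / (a^2*(b^2+1)*c₁ + (b^2+1)*c₂)) := by
  have ha : 0 < a := hb.trans hab
  obtain ⟨hxe, hx2⟩ := hx
  obtain ⟨hye, hy2⟩ := hy
  have hT : 0 < ‖y - x‖ := by simpa [sub_ne_zero] using hxy
  set T := ‖y - x‖ with hTdef
  have hTne : T ≠ 0 := ne_of_gt hT
  have hvC : ∀ i, v i = T⁻¹ * (y i - x i) := by
    intro i; rw [hv]; simp
  have hT2 : T^2 = (y 0 - x 0)^2 + (y 1 - x 1)^2 + (y 2 - x 2)^2 := by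
    rw [hTdef, normsq]; simp
  have hI1' : (x 0*(y 1-x 1) - x 1*(y 0-x 0))^2 + (x 0*(y 2-x 2) - x 2*(y 0-x 0))^2
      + (x 1*(y 2-x 2) - x 2*(y 1-x 1))^2 = c₁*T^2 := by
    have h := h1
    rw [I1, m12, m13, m23, hvC 0, hvC 1, hvC 2] at h
    field_simp at h
    linear_combination h
  have hI2' : a^2*(x 1*(y 2-x 2) - x 2*(y 1-x 1))^2 + b^2*(x 0*(y 2-x 2) - x 2*(y 0-x 0))^2
      - (x 0*(y 1-x 1) - x 1*(y 0-x 0))^2 = c₂*T^2 := by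
    have h := h2
    rw [I2, m12, m13, m23, hvC 0, hvC 1, hvC 2] at h
    field_simp at h
    linear_combination h
  have cross12 : x 0*(y 1-x 1) - x 1*(y 0-x 0) = x 0*y 1 - x 1*y 0 := by ring
  have cross13 : x 0*(y 2-x 2) - x 2*(y 0-x 0) = x 0*y 2 - x 2*y 0 := by ring
  have cross23 : x 1*(y 2-x 2) - x 2*(y 1-x 1) = x 1*y 2 - x 2*y 1 := by ring
  rw [cross12, cross13, cross23] at hI1' hI2'
  have hxne : x ≠ 0 := by intro h0; rw [h0] at hx2; simp at hx2
  have hyne : y ≠ 0 := by intro h0; rw [h0] at hy2; simp at hy2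
  have hrx : 0 < ‖x‖ := norm_pos_iff.mpr hxne
  have hry : 0 < ‖y‖ := norm_pos_iff.mpr hyne
  have hwx : ⟪x, v⟫ = T⁻¹ * (x 0*(y 0-x 0) + x 1*(y 1-x 1) + x 2*(y 2-x 2)) := by
    rw [innerc, hvC 0, hvC 1, hvC 2]; ring
  have hwy : ⟪y, v⟫ = T⁻¹ * (y 0*(y 0-x 0) + y 1*(y 1-x 1) + y 2*(y 2-x 2)) := by
    rw [innerc, hvC 0, hvC 1, hvC 2]; ring
  have hlagx : ‖x‖^2 = c₁ + ⟪x, v⟫^2 := by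
    have hiden : (x 0^2+x 1^2+x 2^2) * T^2
        = ((x 0*y 1 - x 1*y 0)^2 + (x 0*y 2 - x 2*y 0)^2 + (x 1*y 2 - x 2*y 1)^2)
          + (x 0*(y 0-x 0) + x 1*(y 1-x 1) + x 2*(y 2-x 2))^2 := by
      rw [hT2]; ring
    have := hiden
    rw [hI1'] at this
    rw [normsq, hwx]
    field_simp
    linear_combination this
  refine ⟨hlagx, ?_⟩
  have hlagy : ‖y‖^2 = c₁ + ⟪y, v⟫^2 := by
    have hiden : (y 0^2+y 1^2+y 2^2) * T^2
        = ((x 0*y 1 - x 1*y 0)^2 + (x 0*y 2 - x 2*y 0)^2 + (x 1*y 2 - x 2*y 1)^2)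
          + (y 0*(y 0-x 0) + y 1*(y 1-x 1) + y 2*(y 2-x 2))^2 := by
      rw [hT2]; ring
    have := hiden
    rw [hI1'] at this
    rw [normsq, hwy]
    field_simp
    linear_combination this
  have hdiff : ⟪y, v⟫ - ⟪x, v⟫ = T := by
    rw [hwx, hwy]
    have : y 0*(y 0-x 0) + y 1*(y 1-x 1) + y 2*(y 2-x 2)
        - (x 0*(y 0-x 0) + x 1*(y 1-x 1) + x 2*(y 2-x 2)) = T^2 := by
      rw [hT2]; ring
    field_simp
    linear_combination this
  set D := a^2*(b^2+1)*c₁ + (b^2+1)*c₂ with hDdef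
  have hD : 0 < D := by positivity
  set s := 2*a*b*Real.sqrt (c₁*c₂) / D with hsdef
  have hsqrtc₁ : 0 < Real.sqrt c₁ := Real.sqrt_pos.mpr hc₁
  have hsqrtc₂ : 0 < Real.sqrt c₂ := Real.sqrt_pos.mpr hc₂
  have hsplit : Real.sqrt (c₁*c₂) = Real.sqrt c₁ * Real.sqrt c₂ := Real.sqrt_mul hc₁.le _
  have hs0 : 0 < s := by
    rw [hsdef]
    have : 0 < Real.sqrt (c₁*c₂) := Real.sqrt_pos.mpr (by positivity)
    positivity
  have hs1 : s ≤ 1 := by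
    rw [hsdef, div_le_one hD, hDdef]
    exact sbound a b c₁ c₂ ha hb hc₁ hc₂
  have hmaster := master a b (x 0) (x 1) (x 2) (y 0) (y 1) (y 2) hb hab hxe hx2 hye hy2
    (by rw [hI2']; positivity)
  rw [hI1', hI2'] at hmaster
  have hR2x : x 0^2+x 1^2+x 2^2 = ‖x‖^2 := (normsq x).symm
  have hR2y : y 0^2+y 1^2+y 2^2 = ‖y‖^2 := (normsq y).symm
  rw [hR2x, hR2y] at hmaster
  have hsq : (2*a*b*Real.sqrt c₂*(‖x‖*‖y‖))^2 ≤ (D*T)^2 := by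
    have e1 : (2*a*b*Real.sqrt c₂*(‖x‖*‖y‖))^2 = 4*a^2*b^2*c₂*(‖x‖^2*‖y‖^2) := by
      rw [mul_pow, mul_pow, mul_pow, mul_pow, Real.sq_sqrt hc₂.le]; ring
    have e2 : (D*T)^2 = D^2*T^2 := by ring
    rw [e1, e2]
    have hT2pos : 0 < T^2 := by positivity
    rw [← mul_le_mul_iff_of_pos_right hT2pos]
    calc 4*a^2*b^2*c₂*(‖x‖^2*‖y‖^2)*T^2 = 4*a^2*b^2*(c₂*T^2)*(‖x‖^2*‖y‖^2) := by ring
      _ ≤ (a^2*(b^2+1)*(c₁*T^2) + (b^2+1)*(c₂*T^2))^2 := hmaster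
      _ = D^2*T^2*T^2 := by rw [hDdef]; ring
  have hlin : 2*a*b*Real.sqrt c₂*(‖x‖*‖y‖) ≤ D*T :=
    sqle _ _ (by positivity) (mul_pos hD hT) hsq
  have hkey : s * (‖x‖ * ‖y‖) ≤ Real.sqrt c₁ * (⟪y, v⟫ - ⟪x, v⟫) := by
    rw [hdiff, hsdef, hsplit, div_mul_eq_mul_div, div_le_iff₀ hD]
    calc 2*a*b*(Real.sqrt c₁*Real.sqrt c₂)*(‖x‖*‖y‖)
        = Real.sqrt c₁ * (2*a*b*Real.sqrt c₂*(‖x‖*‖y‖)) := by ring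
      _ ≤ Real.sqrt c₁ * (D*T) := by
          exact mul_le_mul_of_nonneg_left hlin hsqrtc₁.le
      _ = Real.sqrt c₁ * T * D := by ring
  exact core s (⟪x, v⟫) (⟪y, v⟫) c₁ (‖x‖) (‖y‖) hs0 hs1 hc₁ hrx hry hlagx hlagy hkey

/-- The number of reflections of a billiard trajectory inside the elliptic cone with fixed
positive values `c₁, c₂` of the first integrals `I₁, I₂` is bounded by
`⌈π / arcsin (2ab√(c₁c₂) / (a²(b²+1)c₁ + (b²+1)c₂))⌉`. -/
theorem stmt_0 (a b c₁ c₂ : ℝ) (hab : b < a) (hb : 0 < b) (hc₁ : 0 < c₁) (hc₂ : 0 < c₂)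
    (N : ℕ) (p v : ℕ → EuclideanSpace ℝ (Fin 3))
    -- the reflection points `p 1, …, p N` lie on the cone
    (hmem : ∀ k, 1 ≤ k → k ≤ N → p k ∈ Ke a b)
    -- consecutive reflection points are distinct
    (hne : ∀ k, 1 ≤ k → k < N → p (k + 1) ≠ p k)
    -- `v k` is the unit direction of the `k`-th segment
    (hv : ∀ k, v k = ‖p (k + 1) - p k‖⁻¹ • (p (k + 1) - p k))
    -- billiard reflection law at every interior reflection point
    (hrefl : ∀ k, 2 ≤ k → k < N → v k - v (k - 1) ≠ 0 ∧
      ∀ u ∈ tangentKe a b (p k), ⟪v k - v (k - 1), u⟫ = 0)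
    -- the values of the first integrals along the trajectory
    (hI1 : ∀ k, 1 ≤ k → k < N → I1 (p k) (v k) = c₁)
    (hI2 : ∀ k, 1 ≤ k → k < N → I2 a b (p k) (v k) = c₂) :
    N ≤ ⌈π / Real.arcsin (2 * a * b * Real.sqrt (c₁ * c₂) /
          (a ^ 2 * (b ^ 2 + 1) * c₁ + (b ^ 2 + 1) * c₂))⌉₊ := by
  have ha : 0 < a := hb.trans hab
  have hD : 0 < a ^ 2 * (b ^ 2 + 1) * c₁ + (b ^ 2 + 1) * c₂ := by positivity
  have hs0 : 0 < 2 * a * b * Real.sqrt (c₁ * c₂) /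
      (a ^ 2 * (b ^ 2 + 1) * c₁ + (b ^ 2 + 1) * c₂) := by
    have : 0 < Real.sqrt (c₁*c₂) := Real.sqrt_pos.mpr (by positivity)
    positivity
  have hδ0 : 0 < Real.arcsin (2 * a * b * Real.sqrt (c₁ * c₂) /
      (a ^ 2 * (b ^ 2 + 1) * c₁ + (b ^ 2 + 1) * c₂)) := Real.arcsin_pos.mpr hs0
  rcases Nat.lt_or_ge N 2 with hN | hN
  · -- N ≤ 1
    have h1 : (1:ℕ) ≤ ⌈π / Real.arcsin (2 * a * b * Real.sqrt (c₁ * c₂) /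
        (a ^ 2 * (b ^ 2 + 1) * c₁ + (b ^ 2 + 1) * c₂))⌉₊ := by
      rw [Nat.one_le_ceil_iff]
      positivity
    omega
  -- N ≥ 2 case
  obtain ⟨χ, hχ⟩ : ∃ χ : ℕ → ℝ,
      χ = fun j => Real.arccos (⟪p j, v (min j (N-1))⟫ / ‖p j‖) := ⟨_, rfl⟩
  -- the step estimate
  have hstep : ∀ j, 1 ≤ j → j ≤ N - 1 →
      χ (j+1) ≤ χ j - Real.arcsin (2 * a * b * Real.sqrt (c₁ * c₂) /
        (a ^ 2 * (b ^ 2 + 1) * c₁ + (b ^ 2 + 1) * c₂)) := by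
    intro j hj1 hjN
    have hjN' : j < N := by omega
    have hS := seg a b c₁ c₂ hb hab hc₁ hc₂ (p j) (p (j+1)) (v j)
      (hmem j (by omega) (by omega)) (hmem (j+1) (by omega) (by omega))
      (hne j hj1 hjN') (hv j) (hI1 j hj1 hjN') (hI2 j hj1 hjN')
    have hSeg := hS.2
    have hminj : min j (N-1) = j := Nat.min_eq_left hjN
    rcases Nat.lt_or_ge j (N-1) with hlt | hge
    · -- j + 1 ≤ N - 1 : use the reflection law at p (j+1)
      have hmin1 : min (j+1) (N-1) = j+1 := Nat.min_eq_left (by omega)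
      have htang : p (j+1) ∈ tangentKe a b (p (j+1)) := by
        have hc := (hmem (j+1) (by omega) (by omega)).1
        simp only [tangentKe, Set.mem_setOf_eq]
        linear_combination (-1 : ℝ)*hc
      have horth := (hrefl (j+1) (by omega) (by omega)).2 (p (j+1)) htang
      rw [Nat.add_sub_cancel] at horth
      have hinner : ⟪p (j+1), v (j+1)⟫ = ⟪p (j+1), v j⟫ := by
        rw [inner_sub_left] at horth
        calc ⟪p (j+1), v (j+1)⟫ = ⟪v (j+1), p (j+1)⟫ := real_inner_comm _ _
          _ = ⟪v j, p (j+1)⟫ := by linarith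
          _ = ⟪p (j+1), v j⟫ := real_inner_comm _ _
      simp only [hχ]
      rw [hmin1, hminj, hinner]
      exact hSeg
    · -- j = N - 1
      have hj : j = N-1 := by omega
      have hmin1 : min (j+1) (N-1) = j := by omega
      simp only [hχ]
      rw [hmin1, hminj]
      exact hSeg
  -- iterate the step estimate
  have hiter : ∀ i : ℕ, 1 + i ≤ N →
      χ (1+i) ≤ χ 1 - (i:ℝ) * Real.arcsin (2 * a * b * Real.sqrt (c₁ * c₂) /
        (a ^ 2 * (b ^ 2 + 1) * c₁ + (b ^ 2 + 1) * c₂)) := by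
    intro i
    induction i with
    | zero => intro _; simp
    | succ n ih =>
      intro hle
      have ihh := ih (by omega)
      have hs := hstep (1+n) (by omega) (by omega)
      have heq : 1+(n+1) = (1+n)+1 := by omega
      rw [heq]
      push_cast
      linarith
  have hfin := hiter (N-1) (by omega)
  rw [show 1+(N-1) = N by omega] at hfin
  have hχN : 0 ≤ χ N := by simp only [hχ]; exact Real.arccos_nonneg _
  -- χ 1 < π
  have hS1 := seg a b c₁ c₂ hb hab hc₁ hc₂ (p 1) (p 2) (v 1)
    (hmem 1 (by omega) (by omega)) (hmem 2 (by omega) (by omega))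
    (hne 1 (by omega) (by omega)) (hv 1) (hI1 1 (by omega) (by omega))
    (hI2 1 (by omega) (by omega))
  have hp12 := (hmem 1 (by omega) (by omega)).2
  have hr1 : 0 < ‖p 1‖ := by
    apply norm_pos_iff.mpr
    intro h0; rw [h0] at hp12; simp at hp12
  have hχ1 : χ 1 < π := by
    simp only [hχ]
    rw [show min 1 (N-1) = 1 from Nat.min_eq_left (by omega)]
    rcases lt_or_eq_of_le (Real.arccos_le_pi (⟪p 1, v 1⟫ / ‖p 1‖)) with h | h
    · exact h
    · exfalso
      rw [Real.arccos_eq_pi] at h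
      have hw : ⟪p 1, v 1⟫ ≤ -‖p 1‖ := by
        rw [div_le_iff₀ hr1, neg_one_mul] at h
        exact h
      nlinarith [hS1.1, hc₁, hr1, hw]
  -- conclude
  have hlt : ((N-1:ℕ):ℝ) * Real.arcsin (2 * a * b * Real.sqrt (c₁ * c₂) /
      (a ^ 2 * (b ^ 2 + 1) * c₁ + (b ^ 2 + 1) * c₂)) < π := by
    calc ((N-1:ℕ):ℝ) * _ ≤ χ 1 - χ N := by linarith
      _ < π := by linarith
  have hlt2 : ((N-1:ℕ):ℝ) < π / Real.arcsin (2 * a * b * Real.sqrt (c₁ * c₂) /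
      (a ^ 2 * (b ^ 2 + 1) * c₁ + (b ^ 2 + 1) * c₂)) := by
    rw [lt_div_iff₀ hδ0]
    exact hlt
  have := Nat.lt_ceil.mpr hlt2
  omega
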